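/- Let f be a Boolean function on k+1 variables that depends on all of them and let Ψ = f(H_{k0},…,H_{kk}). If θ is a partial assignment having at least 3 pairwise independent transversals, then every variable occurring in a prime implicant P_{ℓ,i,j} indexed by a transversal (i,j) of θ is a variable on which the function Ψ[θ] depends. -/

import Mathlib

/-! ### Basic notions on Boolean functions -/

namespace BF

variable {V : Type}

/-- Restriction `Φ[θ]` of a Boolean function `Φ` by a partial assignment `θ`. -/
def restrict (Φ : (V → Bool) → Bool) (θ : V → Option Bool) : (V → Bool) → Bool :=
  fun a => Φ (fun v => (θ v).getD (a v))

/-- Combination `θ ∪ μ` of two partial assignments, where `θ` takes priority. -/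
def combine (θ μ : V → Option Bool) : V → Option Bool :=
  fun v => (θ v).elim (μ v) some

/-- The partial assignment setting the single variable `X` to `b`. -/
def single [DecidableEq V] (X : V) (b : Bool) : V → Option Bool :=
  fun v => if v = X then some b else none

/-- A term (conjunction of literals, given as a partial assignment) implies `Φ`. -/
def TermImplies (τ : V → Option Bool) (Φ : (V → Bool) → Bool) : Prop :=
  ∀ a : V → Bool, (∀ v b, τ v = some b → a v = b) → Φ a = true

/-- `τ'` is a subterm (subconjunction) of `τ`. -/
def Subterm (τ' τ : V → Option Bool) : Prop :=
  ∀ v b, τ' v = some b → τ v = some b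

/-- `τ` is a prime implicant of `Φ`: it implies `Φ`, and no proper subconjunction does. -/
def IsPrimeImplicant (τ : V → Option Bool) (Φ : (V → Bool) → Bool) : Prop :=
  TermImplies τ Φ ∧ ∀ τ', Subterm τ' τ → τ' ≠ τ → ¬ TermImplies τ' Φ

/-- The variable `X` is a unit of `Φ`: by itself (positively) a prime implicant of `Φ`. -/
def IsUnit [DecidableEq V] (X : V) (Φ : (V → Bool) → Bool) : Prop :=
  IsPrimeImplicant (single X true) Φ

/-- `Φ` depends on the variable `v`. -/
def DependsOnVar [DecidableEq V] (Φ : (V → Bool) → Bool) (v : V) : Prop :=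
  ∃ a : V → Bool, Φ (Function.update a v true) ≠ Φ (Function.update a v false)

/-- The set of units of `Φ`. -/
def unitSet [DecidableEq V] (Φ : (V → Bool) → Bool) : Set V :=
  {X | IsUnit X Φ}

/-- The degree of a variable `X` in `Φ`: the maximum over partial assignments `θ`
(not assigning `X`) of the number of units of `Φ[θ ∪ {X=1}]` that are not units of
`Φ[θ]`. -/
noncomputable def degreeOf [Fintype V] [DecidableEq V] (Φ : (V → Bool) → Bool) (X : V) : ℕ :=
  sSup { m | ∃ θ : V → Option Bool, θ X = none ∧
    m = (unitSet (restrict Φ (combine (single X true) θ)) \ unitSet (restrict Φ θ)).ncard }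

/-- `Δ(Φ)`: the maximum degree of any variable of `Φ`. -/
noncomputable def maxDegree [Fintype V] [DecidableEq V] (Φ : (V → Bool) → Bool) : ℕ :=
  Finset.univ.sup (fun X => degreeOf Φ X)

end BF

/-! ### FBDDs (free binary decision diagrams), possibly multi-output -/

/-- A node of a (multi-output) FBDD: a sink labeled by an output value, or a decision
node labeled by a variable with a 0-edge and a 1-edge (children are given as indices,
which are required to be smaller, guaranteeing acyclicity). -/
inductive BddNode (V O : Type) where
  | sink (o : O)
  | decision (x : V) (lo hi : ℕ)

/-- A (multi-output) FBDD structure: a rooted DAG with nodes `0, …, size-1`, in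
topological order (edges decrease the index).  Freeness (read-once) is the
predicate `FBDD.ReadOnce` below. -/
structure FBDD (V O : Type) where
  size : ℕ
  node : Fin size → BddNode V O
  root : Fin size
  dec : ∀ (i : Fin size) (x : V) (lo hi : ℕ),
      node i = .decision x lo hi → lo < i.1 ∧ hi < i.1

namespace FBDD

variable {V O : Type}

/-- The output computed at node `i` on the total assignment `a`. -/
def evalAt (F : FBDD V O) (a : V → Bool) (i : Fin F.size) : O :=
  match h : F.node i with
  | .sink o => o
  | .decision x lo hi =>
      have hd := F.dec i x lo hi h
      if a x then F.evalAt a ⟨hi, hd.2.trans i.isLt⟩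
      else F.evalAt a ⟨lo, hd.1.trans i.isLt⟩
termination_by i.1
decreasing_by
  · exact hd.2
  · exact hd.1

/-- The output of the FBDD on a total assignment. -/
def eval (F : FBDD V O) (a : V → Bool) : O := F.evalAt a F.root

/-- Edge relation of the underlying DAG. -/
def edge (F : FBDD V O) (i j : Fin F.size) : Prop :=
  ∃ x lo hi, F.node i = .decision x lo hi ∧ (j.1 = lo ∨ j.1 = hi)

/-- Reachability in the underlying DAG. -/
def reach (F : FBDD V O) : Fin F.size → Fin F.size → Prop :=
  Relation.ReflTransGen F.edge

/-- Node `i` tests the variable `x`. -/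
def tests (F : FBDD V O) (i : Fin F.size) (x : V) : Prop :=
  ∃ lo hi, F.node i = .decision x lo hi

/-- The FBDD is free (read-once): along every path from the root, each variable is
tested at most once. -/
def ReadOnce (F : FBDD V O) : Prop :=
  ∀ i c j x, F.reach F.root i → F.tests i x → F.edge i c → F.reach c j →
    ¬ F.tests j x

/-- A single-output FBDD computes the Boolean function `Φ`. -/
def Computes (F : FBDD V Bool) (Φ : (V → Bool) → Bool) : Prop :=
  ∀ a, F.eval a = Φ a

/-- A multi-output FBDD simultaneously computes the `m` Boolean functions `Φ`. -/
def ComputesAll {m : ℕ} (F : FBDD V (Fin m → Bool)) (Φ : Fin m → (V → Bool) → Bool) : Prop :=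
  ∀ a l, F.eval a l = Φ l a

/-- The Boolean function computed by the sub-DAG rooted at node `u`. -/
def funAt (F : FBDD V Bool) (u : Fin F.size) : (V → Bool) → Bool :=
  fun a => F.evalAt a u

/-- The FBDD follows the unit rule: at every (reachable) node `u` whose function has a
unit, the variable tested at `u` is a unit of that function. -/
def FollowsUnitRule [DecidableEq V] (F : FBDD V Bool) : Prop :=
  ∀ u : Fin F.size, F.reach F.root u → (∃ X, BF.IsUnit X (F.funAt u)) →
    ∀ x, F.tests u x → BF.IsUnit x (F.funAt u)

end FBDD

/-! ### DLDDs (decomposable logic decision diagrams) -/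

/-- A node of a DLDD: a sink, a decision node, a NOT-node, or a binary
AND/OR/XOR/EQUIV gate (children given as smaller indices). -/
inductive DlddNode (V : Type) where
  | sink (b : Bool)
  | decision (x : V) (lo hi : ℕ)
  | not (c : ℕ)
  | and (c1 c2 : ℕ)
  | or (c1 c2 : ℕ)
  | xor (c1 c2 : ℕ)
  | equiv (c1 c2 : ℕ)

/-- The children of a DLDD node. -/
def DlddNode.children {V : Type} : DlddNode V → List ℕ
  | .sink _ => []
  | .decision _ lo hi => [lo, hi]
  | .not c => [c]
  | .and c1 c2 => [c1, c2]
  | .or c1 c2 => [c1, c2]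
  | .xor c1 c2 => [c1, c2]
  | .equiv c1 c2 => [c1, c2]

/-- The children of a DLDD node, if it is a binary gate. -/
def DlddNode.gateChildren {V : Type} : DlddNode V → Option (ℕ × ℕ)
  | .and c1 c2 => some (c1, c2)
  | .or c1 c2 => some (c1, c2)
  | .xor c1 c2 => some (c1, c2)
  | .equiv c1 c2 => some (c1, c2)
  | _ => none

/-- A DLDD structure: a rooted DAG with nodes `0, …, size-1` in topological order.
Freeness and decomposability are the predicates `DLDD.ReadOnce` and
`DLDD.Decomposable` below. -/
structure DLDD (V : Type) where
  size : ℕ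
  node : Fin size → DlddNode V
  root : Fin size
  dec : ∀ (i : Fin size), ∀ c ∈ (node i).children, c < i.1

namespace DLDD

variable {V : Type}

/-- The Boolean value computed at node `i` on a total assignment `a`. -/
def evalAt (D : DLDD V) (a : V → Bool) (i : Fin D.size) : Bool :=
  match h : D.node i with
  | .sink b => b
  | .decision x lo hi =>
      have hlo : lo < i.1 := D.dec i lo (by rw [h]; simp [DlddNode.children])
      have hhi : hi < i.1 := D.dec i hi (by rw [h]; simp [DlddNode.children])
      if a x then D.evalAt a ⟨hi, hhi.trans i.isLt⟩
      else D.evalAt a ⟨lo, hlo.trans i.isLt⟩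
  | .not c =>
      have hc : c < i.1 := D.dec i c (by rw [h]; simp [DlddNode.children])
      ! D.evalAt a ⟨c, hc.trans i.isLt⟩
  | .and c1 c2 =>
      have h1 : c1 < i.1 := D.dec i c1 (by rw [h]; simp [DlddNode.children])
      have h2 : c2 < i.1 := D.dec i c2 (by rw [h]; simp [DlddNode.children])
      D.evalAt a ⟨c1, h1.trans i.isLt⟩ && D.evalAt a ⟨c2, h2.trans i.isLt⟩
  | .or c1 c2 =>
      have h1 : c1 < i.1 := D.dec i c1 (by rw [h]; simp [DlddNode.children])
      have h2 : c2 < i.1 := D.dec i c2 (by rw [h]; simp [DlddNode.children])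
      D.evalAt a ⟨c1, h1.trans i.isLt⟩ || D.evalAt a ⟨c2, h2.trans i.isLt⟩
  | .xor c1 c2 =>
      have h1 : c1 < i.1 := D.dec i c1 (by rw [h]; simp [DlddNode.children])
      have h2 : c2 < i.1 := D.dec i c2 (by rw [h]; simp [DlddNode.children])
      Bool.xor (D.evalAt a ⟨c1, h1.trans i.isLt⟩) (D.evalAt a ⟨c2, h2.trans i.isLt⟩)
  | .equiv c1 c2 =>
      have h1 : c1 < i.1 := D.dec i c1 (by rw [h]; simp [DlddNode.children])
      have h2 : c2 < i.1 := D.dec i c2 (by rw [h]; simp [DlddNode.children])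
      D.evalAt a ⟨c1, h1.trans i.isLt⟩ == D.evalAt a ⟨c2, h2.trans i.isLt⟩
termination_by i.1
decreasing_by
  · exact hhi
  · exact hlo
  · exact hc
  · exact h1
  · exact h2
  · exact h1
  · exact h2
  · exact h1
  · exact h2
  · exact h1
  · exact h2

/-- The Boolean value computed by the DLDD. -/
def eval (D : DLDD V) (a : V → Bool) : Bool := D.evalAt a D.root

/-- Edge relation of the underlying DAG. -/
def edge (D : DLDD V) (i j : Fin D.size) : Prop := j.1 ∈ (D.node i).children

/-- Reachability in the underlying DAG. -/
def reach (D : DLDD V) : Fin D.size → Fin D.size → Prop :=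
  Relation.ReflTransGen D.edge

/-- Node `i` is a decision node testing the variable `x`. -/
def tests (D : DLDD V) (i : Fin D.size) (x : V) : Prop :=
  ∃ lo hi, D.node i = .decision x lo hi

/-- Along every path from the root, each variable is tested at most once. -/
def ReadOnce (D : DLDD V) : Prop :=
  ∀ i c j x, D.reach D.root i → D.tests i x → D.edge i c → D.reach c j →
    ¬ D.tests j x

/-- The variable `x` is mentioned in the sub-DAG rooted at `i`. -/
def mentions (D : DLDD V) (i : Fin D.size) (x : V) : Prop :=
  ∃ j, D.reach i j ∧ D.tests j x

/-- Decomposability: the two children's sub-DAGs of any (reachable) binary gate node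
mention no common variable. -/
def Decomposable (D : DLDD V) : Prop :=
  ∀ (i : Fin D.size) (c1 c2 : ℕ), D.reach D.root i →
    (D.node i).gateChildren = some (c1, c2) →
    ∀ (h1 : c1 < D.size) (h2 : c2 < D.size) (x : V),
      ¬ (D.mentions ⟨c1, h1⟩ x ∧ D.mentions ⟨c2, h2⟩ x)

/-- The DLDD computes the Boolean function `Φ`. -/
def Computes (D : DLDD V) (Φ : (V → Bool) → Bool) : Prop :=
  ∀ a, D.eval a = Φ a

end DLDD

/-! ### The queries `h_{kℓ}` and their lineages `H_{kℓ}` -/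

/-- The Boolean variables `R(i)`, `S_ℓ(i,j)` (for `1 ≤ ℓ ≤ k`, encoded by `Fin k`),
and `T(j)`, for `i, j ∈ [n]`. -/
inductive HVar (n k : ℕ) where
  | R (i : Fin n)
  | S (l : Fin k) (i j : Fin n)
  | T (j : Fin n)
deriving DecidableEq

/-- The first variable of the prime implicant `P_{ℓ,i,j}`: `R(i)` if `ℓ = 0`,
otherwise `S_ℓ(i,j)`. -/
def leftVar (n k : ℕ) (l : Fin (k+1)) (i j : Fin n) : HVar n k :=
  if h : l.1 = 0 then .R i else .S ⟨l.1 - 1, by have := l.isLt; omega⟩ i j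

/-- The second variable of the prime implicant `P_{ℓ,i,j}`: `T(j)` if `ℓ = k`,
otherwise `S_{ℓ+1}(i,j)`. -/
def rightVar (n k : ℕ) (l : Fin (k+1)) (i j : Fin n) : HVar n k :=
  if h : l.1 = k then .T j else .S ⟨l.1, by have := l.isLt; omega⟩ i j

/-- The conjunction `P_{ℓ,i,j}` as a Boolean function. -/
def Pfun (n k : ℕ) (l : Fin (k+1)) (i j : Fin n) : (HVar n k → Bool) → Bool :=
  fun a => a (leftVar n k l i j) && a (rightVar n k l i j)

/-- The conjunction `P_{ℓ,i,j}` as a term (partial assignment). -/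
def Pterm (n k : ℕ) (l : Fin (k+1)) (i j : Fin n) : HVar n k → Option Bool :=
  fun v => if v = leftVar n k l i j ∨ v = rightVar n k l i j then some true else none

/-- The lineage `H_{kℓ} = ⋁_{i,j∈[n]} P_{ℓ,i,j}`. -/
def Hfun (n k : ℕ) (l : Fin (k+1)) : (HVar n k → Bool) → Bool :=
  fun a => decide (∃ i j : Fin n, Pfun n k l i j a = true)

/-- The lineage `H_k = H_{k0} ∨ H_{k1} ∨ ⋯ ∨ H_{kk}`. -/
def HkFun (n k : ℕ) : (HVar n k → Bool) → Bool :=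
  fun a => decide (∃ l : Fin (k+1), Hfun n k l a = true)

/-- The lineages `B_0 = ⋁_i R(i)`, `B_ℓ = ⋁_{i,j} S_ℓ(i,j)` for `1 ≤ ℓ ≤ k`, and
`B_{k+1} = ⋁_j T(j)`. -/
def Bfun (n k : ℕ) (l : Fin (k+2)) : (HVar n k → Bool) → Bool :=
  fun a => decide (∃ i j : Fin n,
    (if _ : l.1 = 0 then a (.R i)
     else if _ : l.1 = k + 1 then a (.T j)
     else a (.S ⟨l.1 - 1, by have := l.isLt; omega⟩ i j)) = true)

/-- A Boolean function `f` on `m` variables depends on its `l`-th variable: some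
assignment `μ` to the remaining variables restricts `f` to `X_l` or `¬X_l`. -/
def BoolDependsOn {m : ℕ} (f : (Fin m → Bool) → Bool) (l : Fin m) : Prop :=
  ∃ μ : Fin m → Bool,
    (∀ b, f (Function.update μ l b) = b) ∨ (∀ b, f (Function.update μ l b) = !b)

/-- The lineage `Ψ = f(H_{k0}, …, H_{kk})`. -/
def Psi (n k : ℕ) (f : (Fin (k+1) → Bool) → Bool) : (HVar n k → Bool) → Bool :=
  fun a => f (fun l => Hfun n k l a)

/-- `(i,j)` is a transversal of the partial assignment `θ`: for every `0 ≤ ℓ ≤ k`,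
`P_{ℓ,i,j}` is a prime implicant of `H_{kℓ}[θ]`. -/
def Transversal (n k : ℕ) (θ : HVar n k → Option Bool) (p : Fin n × Fin n) : Prop :=
  ∀ l : Fin (k+1), BF.IsPrimeImplicant (Pterm n k l p.1 p.2) (BF.restrict (Hfun n k l) θ)

/-- Two pairs of indices are independent: they differ in both coordinates. -/
def IndepPairs {n : ℕ} (p q : Fin n × Fin n) : Prop := p.1 ≠ q.1 ∧ p.2 ≠ q.2

/-- `θ` has (at least) `m` pairwise independent transversals. -/
def HasIndepTransversals (n k : ℕ) (θ : HVar n k → Option Bool) (m : ℕ) : Prop :=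
  ∃ S : Finset (Fin n × Fin n), m ≤ S.card ∧ (∀ p ∈ S, Transversal n k θ p) ∧
    (S : Set (Fin n × Fin n)).Pairwise IndepPairs

/-- The maximum number of pairwise independent transversals of `θ`. -/
noncomputable def maxIndepTransversals (n k : ℕ) (θ : HVar n k → Option Bool) : ℕ :=
  sSup { m | ∃ S : Finset (Fin n × Fin n), S.card = m ∧ (∀ p ∈ S, Transversal n k θ p) ∧
    (S : Set (Fin n × Fin n)).Pairwise IndepPairs }

/-- A restriction `Φ` of `Ψ = f(H_{k0},…,H_{kk})` is transversal-free: some `θ` with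
`Ψ[θ] = Φ` has no transversals. -/
def TransversalFree (n k : ℕ) (f : (Fin (k+1) → Bool) → Bool)
    (Φ : (HVar n k → Bool) → Bool) : Prop :=
  ∃ θ : HVar n k → Option Bool, BF.restrict (Psi n k f) θ = Φ ∧
    ∀ p : Fin n × Fin n, ¬ Transversal n k θ p

/-- `Z` is an `H_k`-unit of the restriction `Φ` of `Ψ`: `Φ[Z=1]` is transversal-free
but `Φ` is not. -/
def IsHkUnit (n k : ℕ) (f : (Fin (k+1) → Bool) → Bool) (Z : HVar n k)
    (Φ : (HVar n k → Bool) → Bool) : Prop :=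
  TransversalFree n k f (BF.restrict Φ (BF.single Z true)) ∧ ¬ TransversalFree n k f Φ

/-- A restriction `Φ` of `Ψ` is transparent: the residual lineages `H_{kℓ}[θ]` are
the same for every `θ` with `Ψ[θ] = Φ`. -/
def Transparent (n k : ℕ) (f : (Fin (k+1) → Bool) → Bool)
    (Φ : (HVar n k → Bool) → Bool) : Prop :=
  ∃ φ : Fin (k+1) → ((HVar n k → Bool) → Bool),
    ∀ θ : HVar n k → Option Bool, BF.restrict (Psi n k f) θ = Φ →
      ∀ l, BF.restrict (Hfun n k l) θ = φ l

/-- The Boolean variables of the query `h_0`. -/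
inductive H0Var (n : ℕ) where
  | R (i : Fin n)
  | S (i j : Fin n)
  | T (j : Fin n)
deriving DecidableEq

/-- The lineage `H_0 = ⋁_{i,j∈[n]} R(i) ∧ S(i,j) ∧ T(j)`. -/
def H0Fun (n : ℕ) : (H0Var n → Bool) → Bool :=
  fun a => decide (∃ i j : Fin n, (a (.R i) && a (.S i j) && a (.T j)) = true)
namespace P16
open BF

variable {n k : ℕ}

/-- The `m`-th node of the chain `(i,j)`: `R i` at slot `0`, `S ⟨m-1⟩ i j` at slots
`1,…,k`, `T j` at slot `k+1`. -/
def cnode (n k : ℕ) (i j : Fin n) (m : ℕ) : HVar n k :=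
  if h0 : m = 0 then .R i
  else if h : m ≤ k then .S ⟨m - 1, by omega⟩ i j
  else .T j

lemma left_eq (l : Fin (k+1)) (i j : Fin n) :
    leftVar n k l i j = cnode n k i j l.1 := by
  unfold leftVar cnode
  by_cases h : l.1 = 0
  · simp [h]
  · have h2 : l.1 ≤ k := by have := l.isLt; omega
    simp [h, h2]

lemma right_eq (l : Fin (k+1)) (i j : Fin n) :
    rightVar n k l i j = cnode n k i j (l.1 + 1) := by
  unfold rightVar cnode
  by_cases h : l.1 = k
  · simp [h]
  · have h2 : l.1 + 1 ≤ k := by have := l.isLt; omega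
    simp [h, h2]

lemma cnode_inj (hk : 1 ≤ k) {i j i' j' : Fin n} {m m' : ℕ}
    (hm : m ≤ k + 1) (hm' : m' ≤ k + 1)
    (h : cnode n k i j m = cnode n k i' j' m') :
    m = m' ∧ (m = 0 → i = i') ∧ (m = k + 1 → j = j') ∧
      (1 ≤ m → m ≤ k → i = i' ∧ j = j') := by
  unfold cnode at h
  split_ifs at h <;> simp_all <;> omega

lemma lr_ne (hk : 1 ≤ k) (l : Fin (k+1)) (i j : Fin n) :
    leftVar n k l i j ≠ rightVar n k l i j := by
  rw [left_eq, right_eq]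
  intro h
  have := cnode_inj hk (by have := l.isLt; omega) (by have := l.isLt; omega) h
  omega

lemma rH_iff (θ : HVar n k → Option Bool) (a : HVar n k → Bool) (l : Fin (k+1)) :
    BF.restrict (Hfun n k l) θ a = true ↔
      ∃ i j : Fin n,
        (θ (leftVar n k l i j)).getD (a (leftVar n k l i j)) = true ∧
        (θ (rightVar n k l i j)).getD (a (rightVar n k l i j)) = true := by
  simp [BF.restrict, Hfun, Pfun, Bool.and_eq_true]

lemma getD_true {θ : HVar n k → Option Bool} {a : HVar n k → Bool} {w : HVar n k}
    (h : (θ w).getD (a w) = true) :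
    θ w = some true ∨ (θ w = none ∧ a w = true) := by
  cases hw : θ w <;> rw [hw] at h <;> simp_all

lemma Pterm_left (l : Fin (k+1)) (i j : Fin n) :
    Pterm n k l i j (leftVar n k l i j) = some true := by simp [Pterm]

lemma Pterm_right (l : Fin (k+1)) (i j : Fin n) :
    Pterm n k l i j (rightVar n k l i j) = some true := by simp [Pterm]

end P16
namespace P16
open BF

variable {n k : ℕ} {θ : HVar n k → Option Bool} {t : Fin n × Fin n}

/-- No level-`l` pair has both variables set true by `θ` (else the empty term would be
an implicant, contradicting primality of `P_{l,t}`). -/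
lemma no_pair_true (ht : Transversal n k θ t) (l : Fin (k+1)) (i' j' : Fin n)
    (h1 : θ (leftVar n k l i' j') = some true)
    (h2 : θ (rightVar n k l i' j') = some true) : False := by
  refine (ht l).2 (fun _ => none) (fun v b h => by simp at h) ?_ ?_
  · intro heq
    have := congrFun heq (leftVar n k l t.1 t.2)
    rw [Pterm_left] at this
    simp at this
  · intro a _
    rw [rH_iff]
    exact ⟨i', j', by simp [h1], by simp [h2]⟩

/-- A single variable of `P_{l,t}` is never an implicant of `H_{kl}[θ]`. -/
lemma single_not_imp (hk : 1 ≤ k) (ht : Transversal n k θ t) (l : Fin (k+1))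
    (w : HVar n k) (hw : w = leftVar n k l t.1 t.2 ∨ w = rightVar n k l t.1 t.2) :
    ¬ BF.TermImplies (BF.single w true) (BF.restrict (Hfun n k l) θ) := by
  refine (ht l).2 _ ?_ ?_
  · intro v b h
    by_cases hv : v = w
    · subst hv
      simp [BF.single] at h
      subst h
      unfold Pterm
      rcases hw with hw | hw <;> simp [hw]
    · simp [BF.single, hv] at h
  · intro heq
    rcases hw with hw | hw
    · have := congrFun heq (rightVar n k l t.1 t.2)
      rw [Pterm_right] at this
      unfold BF.single at this
      rw [if_neg (by rw [hw]; exact (lr_ne hk l t.1 t.2).symm)] at this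
      simp at this
    · have := congrFun heq (leftVar n k l t.1 t.2)
      rw [Pterm_left] at this
      unfold BF.single at this
      rw [if_neg (by rw [hw]; exact lr_ne hk l t.1 t.2)] at this
      simp at this

/-- If some level-`l` pair has one variable `θ`-true and the other equal to an
unassigned `w`, then the single term `{w := 1}` implies `H_{kl}[θ]`. -/
lemma single_imp (l : Fin (k+1)) (w : HVar n k) (hw : θ w = none) (i' j' : Fin n)
    (hcase : (θ (leftVar n k l i' j') = some true ∧ rightVar n k l i' j' = w) ∨
             (θ (rightVar n k l i' j') = some true ∧ leftVar n k l i' j' = w)) :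
    BF.TermImplies (BF.single w true) (BF.restrict (Hfun n k l) θ) := by
  intro a ha
  have haw : a w = true := ha w true (by simp [BF.single])
  rw [rH_iff]
  rcases hcase with ⟨h1, h2⟩ | ⟨h1, h2⟩
  · exact ⟨i', j', by simp [h1], by rw [h2, hw]; simpa⟩
  · exact ⟨i', j', by rw [h2, hw]; simpa, by simp [h1]⟩

/-- The variables of `P_{l,t}` are unassigned by `θ`, for a transversal `t`. -/
lemma theta_none (hk : 1 ≤ k) (ht : Transversal n k θ t) (l : Fin (k+1)) :
    θ (leftVar n k l t.1 t.2) = none ∧ θ (rightVar n k l t.1 t.2) = none := by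
  have hstar : ∀ bb : Bool,
      (θ (leftVar n k l t.1 t.2) = some bb ∨ θ (rightVar n k l t.1 t.2) = some bb) →
      False := by
    intro bb hbb
    set Lv := leftVar n k l t.1 t.2 with hLv
    set Rv := rightVar n k l t.1 t.2 with hRv
    set a0 : HVar n k → Bool := fun v => decide (v = Lv ∨ v = Rv) with ha0
    have h1 : BF.restrict (Hfun n k l) θ a0 = true := by
      refine (ht l).1 a0 ?_
      intro v b hv
      by_cases hc : v = leftVar n k l t.1 t.2 ∨ v = rightVar n k l t.1 t.2
      · simp only [Pterm] at hv
        rw [if_pos hc] at hv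
        injection hv with hv
        subst hv
        simp only [ha0, decide_eq_true_eq]
        exact hc
      · simp [Pterm, hc] at hv
    rw [rH_iff] at h1
    obtain ⟨i', j', hL', hR'⟩ := h1
    have hchar : ∀ w, (θ w).getD (a0 w) = true →
        θ w = some true ∨ (θ w = none ∧ (w = Lv ∨ w = Rv)) := by
      intro w hw
      rcases getD_true hw with h | ⟨h, h2⟩
      · exact Or.inl h
      · refine Or.inr ⟨h, ?_⟩
        simpa [ha0] using h2
    have hne' := lr_ne hk l i' j'
    rcases hchar _ hL' with hA | ⟨hN, hin⟩ <;> rcases hchar _ hR' with hB | ⟨hN', hin'⟩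
    · exact no_pair_true ht l i' j' hA hB
    · exact single_not_imp hk ht l _ hin'
        (single_imp l _ hN' i' j' (Or.inl ⟨hA, rfl⟩))
    · exact single_not_imp hk ht l _ hin
        (single_imp l _ hN i' j' (Or.inr ⟨hB, rfl⟩))
    · rcases hin with h | h <;> rcases hin' with h' | h'
      · exact hne' (h.trans h'.symm)
      · rcases hbb with hb | hb
        · rw [← h] at hb; rw [hN] at hb; exact nomatch hb
        · rw [← h'] at hb; rw [hN'] at hb; exact nomatch hb
      · rcases hbb with hb | hb
        · rw [← h'] at hb; rw [hN'] at hb; exact nomatch hb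
        · rw [← h] at hb; rw [hN] at hb; exact nomatch hb
      · exact hne' (h.trans h'.symm)
  constructor
  · cases h : θ (leftVar n k l t.1 t.2) with
    | none => rfl
    | some bb => exact (hstar bb (Or.inl h)).elim
  · cases h : θ (rightVar n k l t.1 t.2) with
    | none => rfl
    | some bb => exact (hstar bb (Or.inr h)).elim

/-- Every chain node of a transversal is unassigned by `θ`. -/
lemma cnode_none (hk : 1 ≤ k) (ht : Transversal n k θ t) (m : ℕ) (hm : m ≤ k + 1) :
    θ (cnode n k t.1 t.2 m) = none := by
  by_cases h : m ≤ k
  · have := (theta_none hk ht ⟨m, by omega⟩).1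
    rwa [left_eq] at this
  · have hm' : m = k + 1 := by omega
    have := (theta_none hk ht ⟨k, by omega⟩).2
    rw [right_eq] at this
    simpa [hm'] using this

/-- No "mixed" pair: a level-`l'` pair cannot consist of a `θ`-true variable and a
chain node of a transversal `t`. -/
lemma no_mixed (hk : 1 ≤ k) (ht : Transversal n k θ t) (l' : Fin (k+1))
    (i' j' : Fin n) (m : ℕ) (hm : m ≤ k + 1) :
    (¬ (θ (leftVar n k l' i' j') = some true ∧
        rightVar n k l' i' j' = cnode n k t.1 t.2 m)) ∧
    (¬ (θ (rightVar n k l' i' j') = some true ∧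
        leftVar n k l' i' j' = cnode n k t.1 t.2 m)) := by
  constructor
  · rintro ⟨h1, h2⟩
    rw [right_eq] at h2
    have hinj := cnode_inj hk (by have := l'.isLt; omega) hm h2
    have hmval : m = l'.1 + 1 := hinj.1.symm
    have hw : rightVar n k l' i' j' = rightVar n k l' t.1 t.2 := by
      rw [right_eq, right_eq, h2, hmval]
    have hnone : θ (rightVar n k l' t.1 t.2) = none := (theta_none hk ht l').2
    refine single_not_imp hk ht l' _ (Or.inr rfl) ?_
    exact single_imp l' _ hnone i' j' (Or.inl ⟨h1, hw⟩)
  · rintro ⟨h1, h2⟩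
    rw [left_eq] at h2
    have hinj := cnode_inj hk (by have := l'.isLt; omega) hm h2
    have hmval : m = l'.1 := hinj.1.symm
    have hw : leftVar n k l' i' j' = leftVar n k l' t.1 t.2 := by
      rw [left_eq, left_eq, h2, hmval]
    have hnone : θ (leftVar n k l' t.1 t.2) = none := (theta_none hk ht l').1
    refine single_not_imp hk ht l' _ (Or.inl rfl) ?_
    exact single_imp l' _ hnone i' j' (Or.inr ⟨h1, hw⟩)

end P16
namespace P16
open BF

variable {n k : ℕ} {θ : HVar n k → Option Bool}

/-- Master evaluation lemma: if the support of `a` is contained in the chain nodes of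
three transversals, then `H_{kl}[θ](a)` is true iff some level-`l` pair is fully
`a`-true. -/
lemma master (hk : 1 ≤ k) {c d e : Fin n × Fin n}
    (hc : Transversal n k θ c) (hd : Transversal n k θ d) (he : Transversal n k θ e)
    (a : HVar n k → Bool)
    (hsupp : ∀ v, a v = true → ∃ m, m ≤ k + 1 ∧
      (v = cnode n k c.1 c.2 m ∨ v = cnode n k d.1 d.2 m ∨ v = cnode n k e.1 e.2 m))
    (l : Fin (k+1)) :
    BF.restrict (Hfun n k l) θ a =
      decide (∃ i' j' : Fin n,
        a (leftVar n k l i' j') = true ∧ a (rightVar n k l i' j') = true) := by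
  rw [Bool.eq_iff_iff, rH_iff, decide_eq_true_eq]
  constructor
  · rintro ⟨i', j', hL, hR⟩
    rcases getD_true hL with h1 | ⟨h1, h2⟩ <;> rcases getD_true hR with g1 | ⟨g1, g2⟩
    · exact (no_pair_true hc l i' j' h1 g1).elim
    · obtain ⟨m, hm, hv⟩ := hsupp _ g2
      rcases hv with hv | hv | hv
      · exact absurd ⟨h1, hv⟩ (no_mixed hk hc l i' j' m hm).1
      · exact absurd ⟨h1, hv⟩ (no_mixed hk hd l i' j' m hm).1
      · exact absurd ⟨h1, hv⟩ (no_mixed hk he l i' j' m hm).1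
    · obtain ⟨m, hm, hv⟩ := hsupp _ h2
      rcases hv with hv | hv | hv
      · exact absurd ⟨g1, hv⟩ (no_mixed hk hc l i' j' m hm).2
      · exact absurd ⟨g1, hv⟩ (no_mixed hk hd l i' j' m hm).2
      · exact absurd ⟨g1, hv⟩ (no_mixed hk he l i' j' m hm).2
    · exact ⟨i', j', h2, g2⟩
  · rintro ⟨i', j', hL, hR⟩
    obtain ⟨m, hm, hv⟩ := hsupp _ hL
    have hnL : θ (leftVar n k l i' j') = none := by
      rcases hv with hv | hv | hv
      · rw [hv]; exact cnode_none hk hc m hm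
      · rw [hv]; exact cnode_none hk hd m hm
      · rw [hv]; exact cnode_none hk he m hm
    obtain ⟨m', hm', hv'⟩ := hsupp _ hR
    have hnR : θ (rightVar n k l i' j') = none := by
      rcases hv' with hv' | hv' | hv'
      · rw [hv']; exact cnode_none hk hc m' hm'
      · rw [hv']; exact cnode_none hk hd m' hm'
      · rw [hv']; exact cnode_none hk he m' hm'
    exact ⟨i', j', by rw [hnL]; simpa, by rw [hnR]; simpa⟩

end P16
namespace P16
open BF
open scoped Classical

variable {n k : ℕ}

/-- Slot `m` of a helper chain is used: some true level `l2 ≠ L` assigned to this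
chain (via `σ l2 = bb`) has `m` as one of its two slots. -/
def SlotD (k : ℕ) (L : Fin (k+1)) (μ : Fin (k+1) → Bool) (σ : ℕ → Bool) (bb : Bool)
    (m : ℕ) : Prop :=
  ∃ l2 : Fin (k+1), l2 ≠ L ∧ μ l2 = true ∧ σ l2.1 = bb ∧ (m = l2.1 ∨ m = l2.1 + 1)

/-- Membership in the support of the constructed assignment. -/
def Mem (n k : ℕ) (c d e : Fin n × Fin n) (L : Fin (k+1)) (μ : Fin (k+1) → Bool)
    (σ : ℕ → Bool) (v : HVar n k) : Prop :=
  v = cnode n k c.1 c.2 L.1 ∨ v = cnode n k c.1 c.2 (L.1 + 1) ∨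
  (∃ m, m ≤ k + 1 ∧ v = cnode n k d.1 d.2 m ∧ SlotD k L μ σ false m) ∨
  (∃ m, m ≤ k + 1 ∧ v = cnode n k e.1 e.2 m ∧ SlotD k L μ σ true m)

/-- The constructed assignment: `X` gets the value `b`, the rest of the support gets
`true`, everything else `false`. -/
noncomputable def Aa (n k : ℕ) (c d e : Fin n × Fin n) (L : Fin (k+1))
    (μ : Fin (k+1) → Bool) (σ : ℕ → Bool) (X : HVar n k) (b : Bool) :
    HVar n k → Bool :=
  fun v => if v = X then b else if Mem n k c d e L μ σ v then true else false

lemma Aa_true {c d e : Fin n × Fin n} {L : Fin (k+1)} {μ : Fin (k+1) → Bool}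
    {σ : ℕ → Bool} {X : HVar n k} {b : Bool}
    (hX : Mem n k c d e L μ σ X) (v : HVar n k) :
    Aa n k c d e L μ σ X b v = true ↔
      (Mem n k c d e L μ σ v ∧ (v = X → b = true)) := by
  unfold Aa
  by_cases h : v = X
  · subst h; simp [hX]
  · simp [h]

/-- Coordinate information from a chain-node equality. -/
def Mtch (k : ℕ) {n : ℕ} (u : Fin n × Fin n) (i' j' : Fin n) (s : ℕ) : Prop :=
  (s = 0 → i' = u.1) ∧ (s = k + 1 → j' = u.2) ∧ (1 ≤ s → s ≤ k → i' = u.1 ∧ j' = u.2)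

lemma mem_elim (hk : 1 ≤ k) {c d e : Fin n × Fin n} {L : Fin (k+1)}
    {μ : Fin (k+1) → Bool} {σ : ℕ → Bool} {i' j' : Fin n} {s : ℕ}
    (hs : s ≤ k + 1) (h : Mem n k c d e L μ σ (cnode n k i' j' s)) :
    ((s = L.1 ∨ s = L.1 + 1) ∧ Mtch k c i' j' s) ∨
    (SlotD k L μ σ false s ∧ Mtch k d i' j' s) ∨
    (SlotD k L μ σ true s ∧ Mtch k e i' j' s) := by
  have hL1 : L.1 ≤ k + 1 := by have := L.isLt; omega
  have hL2 : L.1 + 1 ≤ k + 1 := by have := L.isLt; omega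
  rcases h with h | h | ⟨m, hm, h, hslot⟩ | ⟨m, hm, h, hslot⟩
  · obtain ⟨h1, h2, h3, h4⟩ := cnode_inj hk hs hL1 h
    exact Or.inl ⟨Or.inl h1, h2, h3, h4⟩
  · obtain ⟨h1, h2, h3, h4⟩ := cnode_inj hk hs hL2 h
    exact Or.inl ⟨Or.inr h1, h2, h3, h4⟩
  · obtain ⟨h1, h2, h3, h4⟩ := cnode_inj hk hs hm h
    exact Or.inr (Or.inl ⟨h1 ▸ hslot, h2, h3, h4⟩)
  · obtain ⟨h1, h2, h3, h4⟩ := cnode_inj hk hs hm h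
    exact Or.inr (Or.inr ⟨h1 ▸ hslot, h2, h3, h4⟩)

lemma node_eq {u : Fin n × Fin n} {i' j' : Fin n} {s : ℕ} (hs : s ≤ k + 1)
    (h : Mtch k u i' j' s) : cnode n k i' j' s = cnode n k u.1 u.2 s := by
  obtain ⟨h1, h2, h3⟩ := h
  unfold cnode
  split_ifs with e1 e2
  · rw [h1 e1]
  · rw [(h3 (by omega) e2).1, (h3 (by omega) e2).2]
  · rw [h2 (by omega)]

lemma link (hk : 1 ≤ k) {u u' : Fin n × Fin n} {i' j' : Fin n} {s : ℕ} (hs : s ≤ k)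
    (h1 : Mtch k u i' j' s) (h2 : Mtch k u' i' j' (s + 1)) :
    (u.1 = u'.1 ∧ u.2 = u'.2) ∨ (s = 0 ∧ u.1 = u'.1) ∨ (s = k ∧ u.2 = u'.2) := by
  obtain ⟨a1, a2, a3⟩ := h1
  obtain ⟨b1, b2, b3⟩ := h2
  by_cases h0 : s = 0
  · subst h0
    have hi := a1 rfl
    have h' := b3 (by omega) (by omega)
    exact Or.inr (Or.inl ⟨rfl, hi.symm.trans h'.1⟩)
  · by_cases hsk : s = k
    · have h' := a3 (by omega) (by omega)
      have hj := b2 (by omega)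
      exact Or.inr (Or.inr ⟨hsk, h'.2.symm.trans hj⟩)
    · have p := a3 (by omega) (by omega)
      have q := b3 (by omega) (by omega)
      exact Or.inl ⟨p.1.symm.trans q.1, p.2.symm.trans q.2⟩

lemma enode_ne_X (hk : 1 ≤ k) {c e : Fin n × Fin n} {L : Fin (k+1)} {X : HVar n k}
    (hX : X = cnode n k c.1 c.2 L.1 ∨ X = cnode n k c.1 c.2 (L.1 + 1))
    (hec1 : e.1 ≠ c.1) (hec2 : e.2 ≠ c.2) {s : ℕ} (hs : s ≤ k + 1) :
    cnode n k e.1 e.2 s ≠ X := by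
  intro heq
  rcases hX with hX | hX <;>
  · rw [hX] at heq
    have h := cnode_inj hk hs (by have := L.isLt; omega) heq
    by_cases h0 : s = 0
    · exact hec1 (h.2.1 h0)
    · by_cases hsk : s ≤ k
      · exact hec1 (h.2.2.2 (by omega) hsk).1
      · exact hec2 (h.2.2.1 (by omega))

lemma dnode_ne_X (hk : 1 ≤ k) {c d : Fin n × Fin n} {L : Fin (k+1)}
    {μ : Fin (k+1) → Bool} {σ : ℕ → Bool} {X : HVar n k}
    (hX : X = cnode n k c.1 c.2 L.1 ∨ X = cnode n k c.1 c.2 (L.1 + 1))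
    (hdc : d ≠ c)
    (HsR : d.1 = c.1 → σ 0 = true ∧ σ 1 = true)
    (HsT : d.2 = c.2 → σ (k - 1) = true ∧ σ k = true)
    {s : ℕ} (hs : s ≤ k + 1) (hslot : SlotD k L μ σ false s) :
    cnode n k d.1 d.2 s ≠ X := by
  intro heq
  obtain ⟨l2, hne, hmu, hsg, hor⟩ := hslot
  rcases hX with hX | hX <;>
  · rw [hX] at heq
    have h := cnode_inj hk hs (by have := L.isLt; omega) heq
    by_cases h0 : s = 0
    · have hd1 : d.1 = c.1 := h.2.1 h0
      have hl2 : l2.1 = 0 := by rcases hor with hh | hh <;> omega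
      rw [hl2, (HsR hd1).1] at hsg
      exact Bool.noConfusion hsg
    · by_cases hsk : s ≤ k
      · exact hdc (Prod.ext (h.2.2.2 (by omega) hsk).1 (h.2.2.2 (by omega) hsk).2)
      · have hd2 : d.2 = c.2 := h.2.2.1 (by omega)
        have hl2 : l2.1 = k := by have := l2.isLt; rcases hor with hh | hh <;> omega
        rw [hl2, (HsT hd2).2] at hsg
        exact Bool.noConfusion hsg

lemma Aa_supp {c d e : Fin n × Fin n} {L : Fin (k+1)} {μ : Fin (k+1) → Bool}
    {σ : ℕ → Bool} {X : HVar n k} {b : Bool}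
    (hX : X = cnode n k c.1 c.2 L.1 ∨ X = cnode n k c.1 c.2 (L.1 + 1)) :
    ∀ v, Aa n k c d e L μ σ X b v = true → ∃ m, m ≤ k + 1 ∧
      (v = cnode n k c.1 c.2 m ∨ v = cnode n k d.1 d.2 m ∨ v = cnode n k e.1 e.2 m) := by
  intro v hv
  have hL : L.1 ≤ k := by have := L.isLt; omega
  unfold Aa at hv
  split_ifs at hv with h1 h2
  · subst h1
    rcases hX with hX | hX
    · exact ⟨L.1, by omega, Or.inl hX⟩
    · exact ⟨L.1 + 1, by omega, Or.inl hX⟩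
  · rcases h2 with h | h | ⟨m, hm, h, _⟩ | ⟨m, hm, h, _⟩
    · exact ⟨L.1, by omega, Or.inl h⟩
    · exact ⟨L.1 + 1, by omega, Or.inl h⟩
    · exact ⟨m, hm, Or.inr (Or.inl h)⟩
    · exact ⟨m, hm, Or.inr (Or.inr h)⟩

end P16
namespace P16
open BF
open scoped Classical

variable {n k : ℕ}

/-- Core combinatorial lemma: the constructed assignment realizes exactly the target
pattern of levels. -/
lemma core (hk : 1 ≤ k) (c d e : Fin n × Fin n) (L : Fin (k+1))
    (μ : Fin (k+1) → Bool) (σ : ℕ → Bool) (X : HVar n k) (b : Bool)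
    (hX : X = cnode n k c.1 c.2 L.1 ∨ X = cnode n k c.1 c.2 (L.1 + 1))
    (hdc : d ≠ c) (hec1 : e.1 ≠ c.1) (hec2 : e.2 ≠ c.2)
    (hed1 : e.1 ≠ d.1) (hed2 : e.2 ≠ d.2)
    (Hs : ∀ m, m + 2 ≤ k → σ m ≠ σ (m + 2))
    (HsR : d.1 = c.1 → σ 0 = true ∧ σ 1 = true)
    (HsT : d.2 = c.2 → σ (k - 1) = true ∧ σ k = true)
    (l : Fin (k+1)) :
    (∃ i' j' : Fin n, Aa n k c d e L μ σ X b (leftVar n k l i' j') = true ∧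
        Aa n k c d e L μ σ X b (rightVar n k l i' j') = true) ↔
      (if l = L then b else μ l) = true := by
  have hMemX : Mem n k c d e L μ σ X := by
    rcases hX with hX | hX
    · exact Or.inl hX
    · exact Or.inr (Or.inl hX)
  have hs : l.1 ≤ k := by have := l.isLt; omega
  have hs1 : l.1 ≤ k + 1 := by omega
  have hs2 : l.1 + 1 ≤ k + 1 := by omega
  constructor
  · rintro ⟨i', j', hA1, hA2⟩
    rw [left_eq, Aa_true hMemX] at hA1
    rw [right_eq, Aa_true hMemX] at hA2
    rcases mem_elim hk hs1 hA1.1 with ⟨hsl, hm1⟩ | ⟨hsl, hm1⟩ | ⟨hsl, hm1⟩ <;>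
      rcases mem_elim hk hs2 hA2.1 with ⟨hsr, hm2⟩ | ⟨hsr, hm2⟩ | ⟨hsr, hm2⟩
    · -- CC
      have hlL : l.1 = L.1 := by omega
      have hlL' : l = L := Fin.ext hlL
      rw [if_pos hlL']
      rcases hX with hX' | hX'
      · exact hA1.2 (by rw [node_eq hs1 hm1, hlL, ← hX'])
      · exact hA2.2 (by rw [node_eq hs2 hm2, hlL, ← hX'])
    · -- CD
      exfalso
      rcases link hk hs hm1 hm2 with ⟨q1, q2⟩ | ⟨q0, q1⟩ | ⟨qk, q2⟩
      · exact hdc (Prod.ext q1.symm q2.symm)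
      · obtain ⟨l2, hne, hmu, hsg, hor⟩ := hsr
        have hl2 : l2.1 = 0 ∨ l2.1 = 1 := by rcases hor with hh | hh <;> omega
        rcases hl2 with hl2 | hl2 <;> rw [hl2] at hsg
        · rw [(HsR q1.symm).1] at hsg; exact Bool.noConfusion hsg
        · rw [(HsR q1.symm).2] at hsg; exact Bool.noConfusion hsg
      · obtain ⟨l2, hne, hmu, hsg, hor⟩ := hsr
        have hl2 : l2.1 = k := by have := l2.isLt; rcases hor with hh | hh <;> omega
        rw [hl2, (HsT q2.symm).2] at hsg
        exact Bool.noConfusion hsg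
    · -- CE
      exfalso
      rcases link hk hs hm1 hm2 with ⟨q1, q2⟩ | ⟨q0, q1⟩ | ⟨qk, q2⟩
      · exact hec1 q1.symm
      · exact hec1 q1.symm
      · exact hec2 q2.symm
    · -- DC
      exfalso
      rcases link hk hs hm1 hm2 with ⟨q1, q2⟩ | ⟨q0, q1⟩ | ⟨qk, q2⟩
      · exact hdc (Prod.ext q1 q2)
      · obtain ⟨l2, hne, hmu, hsg, hor⟩ := hsl
        have hl2 : l2.1 = 0 := by rcases hor with hh | hh <;> omega
        rw [hl2, (HsR q1).1] at hsg
        exact Bool.noConfusion hsg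
      · obtain ⟨l2, hne, hmu, hsg, hor⟩ := hsl
        have hl2 : l2.1 = k ∨ l2.1 = k - 1 := by
          have := l2.isLt; rcases hor with hh | hh <;> omega
        rcases hl2 with hl2 | hl2 <;> rw [hl2] at hsg
        · rw [(HsT q2).2] at hsg; exact Bool.noConfusion hsg
        · rw [(HsT q2).1] at hsg; exact Bool.noConfusion hsg
    · -- DD
      obtain ⟨l2, hne2, hmu2, hsg2, hor2⟩ := hsl
      obtain ⟨l3, hne3, hmu3, hsg3, hor3⟩ := hsr
      rcases hor2 with h2 | h2
      · have hll : l = l2 := Fin.ext h2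
        rw [if_neg (fun hh => hne2 (hll.symm.trans hh)), hll]
        exact hmu2
      · rcases hor3 with h3 | h3
        · exfalso
          have hcon : l2.1 + 2 = l3.1 := by omega
          have hk3 : l2.1 + 2 ≤ k := by have := l3.isLt; omega
          have hcontra := Hs l2.1 hk3
          rw [hcon] at hcontra
          exact hcontra (hsg2.trans hsg3.symm)
        · have hll : l = l3 := Fin.ext (by omega)
          rw [if_neg (fun hh => hne3 (hll.symm.trans hh)), hll]
          exact hmu3
    · -- DE
      exfalso
      rcases link hk hs hm1 hm2 with ⟨q1, q2⟩ | ⟨q0, q1⟩ | ⟨qk, q2⟩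
      · exact hed1 q1.symm
      · exact hed1 q1.symm
      · exact hed2 q2.symm
    · -- EC
      exfalso
      rcases link hk hs hm1 hm2 with ⟨q1, q2⟩ | ⟨q0, q1⟩ | ⟨qk, q2⟩
      · exact hec1 q1
      · exact hec1 q1
      · exact hec2 q2
    · -- ED
      exfalso
      rcases link hk hs hm1 hm2 with ⟨q1, q2⟩ | ⟨q0, q1⟩ | ⟨qk, q2⟩
      · exact hed1 q1
      · exact hed1 q1
      · exact hed2 q2
    · -- EE
      obtain ⟨l2, hne2, hmu2, hsg2, hor2⟩ := hsl
      obtain ⟨l3, hne3, hmu3, hsg3, hor3⟩ := hsr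
      rcases hor2 with h2 | h2
      · have hll : l = l2 := Fin.ext h2
        rw [if_neg (fun hh => hne2 (hll.symm.trans hh)), hll]
        exact hmu2
      · rcases hor3 with h3 | h3
        · exfalso
          have hcon : l2.1 + 2 = l3.1 := by omega
          have hk3 : l2.1 + 2 ≤ k := by have := l3.isLt; omega
          have hcontra := Hs l2.1 hk3
          rw [hcon] at hcontra
          exact hcontra (hsg2.trans hsg3.symm)
        · have hll : l = l3 := Fin.ext (by omega)
          rw [if_neg (fun hh => hne3 (hll.symm.trans hh)), hll]
          exact hmu3
  · intro htarget
    by_cases hlL : l = L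
    · rw [if_pos hlL] at htarget
      refine ⟨c.1, c.2, ?_, ?_⟩
      · rw [left_eq, Aa_true hMemX]
        exact ⟨Or.inl (by rw [hlL]), fun _ => htarget⟩
      · rw [right_eq, Aa_true hMemX]
        exact ⟨Or.inr (Or.inl (by rw [hlL])), fun _ => htarget⟩
    · rw [if_neg hlL] at htarget
      by_cases hsig : σ l.1 = true
      · refine ⟨e.1, e.2, ?_, ?_⟩
        · rw [left_eq, Aa_true hMemX]
          refine ⟨Or.inr (Or.inr (Or.inr ⟨l.1, hs1, rfl, l, hlL, htarget, hsig,
            Or.inl rfl⟩)), fun heq => absurd heq (enode_ne_X hk hX hec1 hec2 hs1)⟩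
        · rw [right_eq, Aa_true hMemX]
          refine ⟨Or.inr (Or.inr (Or.inr ⟨l.1 + 1, hs2, rfl, l, hlL, htarget, hsig,
            Or.inr rfl⟩)), fun heq => absurd heq (enode_ne_X hk hX hec1 hec2 hs2)⟩
      · have hsig' : σ l.1 = false := by
          cases hb : σ l.1
          · rfl
          · exact absurd hb hsig
        refine ⟨d.1, d.2, ?_, ?_⟩
        · rw [left_eq, Aa_true hMemX]
          refine ⟨Or.inr (Or.inr (Or.inl ⟨l.1, hs1, rfl, l, hlL, htarget, hsig',
            Or.inl rfl⟩)), fun heq => absurd heq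
              (dnode_ne_X hk hX hdc HsR HsT hs1
                ⟨l, hlL, htarget, hsig', Or.inl rfl⟩)⟩
        · rw [right_eq, Aa_true hMemX]
          refine ⟨Or.inr (Or.inr (Or.inl ⟨l.1 + 1, hs2, rfl, l, hlL, htarget, hsig',
            Or.inr rfl⟩)), fun heq => absurd heq
              (dnode_ne_X hk hX hdc HsR HsT hs2
                ⟨l, hlL, htarget, hsig', Or.inr rfl⟩)⟩

end P16
namespace P16
open BF

variable {n k : ℕ}

/-- From three pairwise independent pairs one can select helpers `d`, `e` with `d ≠ c`
and `e` independent from both `c` and `d`. -/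
lemma select {c : Fin n × Fin n} {S : Finset (Fin n × Fin n)} (hcard : 3 ≤ S.card)
    (hpw : (S : Set (Fin n × Fin n)).Pairwise IndepPairs) :
    ∃ d e : Fin n × Fin n, d ∈ S ∧ e ∈ S ∧ d ≠ c ∧
      e.1 ≠ c.1 ∧ e.2 ≠ c.2 ∧ e.1 ≠ d.1 ∧ e.2 ≠ d.2 := by
  obtain ⟨t1, t2, t3, h1, h2, h3, h12, h13, h23⟩ :=
    Finset.two_lt_card_iff.mp (show 2 < S.card by omega)
  have I12 : t1.1 ≠ t2.1 ∧ t1.2 ≠ t2.2 :=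
    hpw (Finset.mem_coe.mpr h1) (Finset.mem_coe.mpr h2) h12
  have I13 : t1.1 ≠ t3.1 ∧ t1.2 ≠ t3.2 :=
    hpw (Finset.mem_coe.mpr h1) (Finset.mem_coe.mpr h3) h13
  have I23 : t2.1 ≠ t3.1 ∧ t2.2 ≠ t3.2 :=
    hpw (Finset.mem_coe.mpr h2) (Finset.mem_coe.mpr h3) h23
  have key : ∃ e u v : Fin n × Fin n, e ∈ S ∧ u ∈ S ∧ v ∈ S ∧
      e.1 ≠ c.1 ∧ e.2 ≠ c.2 ∧ e.1 ≠ u.1 ∧ e.2 ≠ u.2 ∧ e.1 ≠ v.1 ∧ e.2 ≠ v.2 ∧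
      u.1 ≠ v.1 := by
    by_cases a1 : t1.1 = c.1
    · by_cases b2 : t2.2 = c.2
      · exact ⟨t3, t1, t2, h3, h1, h2, fun hh => I13.1 (a1.trans hh.symm),
          fun hh => I23.2 (b2.trans hh.symm), I13.1.symm , I13.2.symm ,
          I23.1.symm , I23.2.symm , I12.1⟩
      · exact ⟨t2, t1, t3, h2, h1, h3, fun hh => I12.1 (a1.trans hh.symm), b2,
          I12.1.symm , I12.2.symm , I23.1, I23.2, I13.1⟩
    · by_cases b1 : t1.2 = c.2
      · by_cases a2 : t2.1 = c.1
        · exact ⟨t3, t1, t2, h3, h1, h2, fun hh => I23.1 (a2.trans hh.symm),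
            fun hh => I13.2 (b1.trans hh.symm), I13.1.symm , I13.2.symm ,
            I23.1.symm , I23.2.symm , I12.1⟩
        · exact ⟨t2, t1, t3, h2, h1, h3, a2, fun hh => I12.2 (b1.trans hh.symm),
            I12.1.symm , I12.2.symm , I23.1, I23.2, I13.1⟩
      · exact ⟨t1, t2, t3, h1, h2, h3, a1, b1, I12.1, I12.2, I13.1, I13.2, I23.1⟩
  obtain ⟨e0, u, v, heS, huS, hvS, he1, he2, heu1, heu2, hev1, hev2, huv⟩ := key
  by_cases hu : u = c
  · exact ⟨v, e0, hvS, heS, fun hh => huv (by rw [hu, hh]), he1, he2, hev1, hev2⟩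
  · exact ⟨u, e0, huS, heS, hu, he1, he2, heu1, heu2⟩

end P16
/-- If `f` depends on all of its `k+1` variables,
`Ψ = f(H_{k0},…,H_{kk})`, and `θ` has at least 3 pairwise independent transversals,
then every variable occurring in a prime implicant `P_{ℓ,i,j}` indexed by a
transversal `(i,j)` of `θ` is a variable on which `Ψ[θ]` depends. -/
theorem transversal_vars_relevant (n k : ℕ) (hn : 1 ≤ n) (hk : 1 ≤ k)
    (f : (Fin (k+1) → Bool) → Bool) (hf : ∀ l, BoolDependsOn f l)
    (θ : HVar n k → Option Bool) (hθ : HasIndepTransversals n k θ 3) :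
    ∀ p : Fin n × Fin n, Transversal n k θ p → ∀ l : Fin (k+1),
      BF.DependsOnVar (BF.restrict (Psi n k f) θ) (leftVar n k l p.1 p.2) ∧
      BF.DependsOnVar (BF.restrict (Psi n k f) θ) (rightVar n k l p.1 p.2) := by
  intro p hp l
  obtain ⟨S, hcard, htrans, hpw⟩ := hθ
  obtain ⟨d, e, hdS, heS, hdc, hec1, hec2, hed1, hed2⟩ := P16.select hcard hpw
  have hd : Transversal n k θ d := htrans d hdS
  have he : Transversal n k θ e := htrans e heS
  obtain ⟨σ, Hs, HsR, HsT⟩ : ∃ σ : ℕ → Bool,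
      (∀ m, m + 2 ≤ k → σ m ≠ σ (m + 2)) ∧
      (d.1 = p.1 → σ 0 = true ∧ σ 1 = true) ∧
      (d.2 = p.2 → σ (k - 1) = true ∧ σ k = true) := by
    by_cases hcase : d.1 = p.1
    · refine ⟨fun m => decide (m / 2 % 2 = 0), ?_, ?_, ?_⟩
      · intro m hm
        simp only [ne_eq, decide_eq_decide]
        omega
      · intro _
        constructor <;> rfl
      · intro h
        exact absurd (Prod.ext hcase h) hdc
    · refine ⟨fun m => decide ((k - m) / 2 % 2 = 0), ?_, ?_, ?_⟩
      · intro m hm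
        simp only [ne_eq, decide_eq_decide]
        omega
      · intro h
        exact absurd h hcase
      · intro _
        constructor <;> (simp only [decide_eq_true_eq]; omega)
  have key : ∀ X : HVar n k,
      (X = P16.cnode n k p.1 p.2 l.1 ∨ X = P16.cnode n k p.1 p.2 (l.1 + 1)) →
      BF.DependsOnVar (BF.restrict (Psi n k f) θ) X := by
    intro X hX
    obtain ⟨μ0, hμ0⟩ := hf l
    refine ⟨P16.Aa n k p d e l μ0 σ X false, ?_⟩
    have hupd : ∀ bb, Function.update (P16.Aa n k p d e l μ0 σ X false) X bb
        = P16.Aa n k p d e l μ0 σ X bb := by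
      intro bb
      funext v
      by_cases hv : v = X
      · subst hv
        simp [P16.Aa]
      · simp [Function.update_of_ne hv, P16.Aa, hv]
    have hval : ∀ bb, BF.restrict (Psi n k f) θ (P16.Aa n k p d e l μ0 σ X bb)
        = f (Function.update μ0 l bb) := by
      intro bb
      show f (fun l' => Hfun n k l'
        (fun v => (θ v).getD (P16.Aa n k p d e l μ0 σ X bb v))) = _
      congr 1
      funext l'
      have h1 := P16.master hk hp hd he (P16.Aa n k p d e l μ0 σ X bb)
        (P16.Aa_supp hX) l'
      have h2 := P16.core hk p d e l μ0 σ X bb hX hdc hec1 hec2 hed1 hed2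
        Hs HsR HsT l'
      show BF.restrict (Hfun n k l') θ (P16.Aa n k p d e l μ0 σ X bb)
        = Function.update μ0 l bb l'
      rw [h1, Function.update_apply, Bool.eq_iff_iff, decide_eq_true_eq]
      exact h2
    rw [hupd true, hupd false, hval true, hval false]
    rcases hμ0 with h | h
    · rw [h true, h false]
      simp
    · rw [h true, h false]
      simp
  exact ⟨key _ (Or.inl (P16.left_eq l p.1 p.2)), key _ (Or.inr (P16.right_eq l p.1 p.2))⟩
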